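/- arXiv:2001.07765 — 2 statements merged into one kernel-verified Lean document; each statement's English description precedes it below -/
import Mathlib

section
/- The insertion node u of any inclusion-minimal constrained cograph completion of G+x has at least one hollow child and at least one non-hollow child in the cotree T of G; in particular u is non-hollow and non-completion-forced. -/
universe u

def IsCograph {α : Type*} (G : SimpleGraph α) : Prop :=
  ¬ ∃ f : Fin 4 → α, Function.Injective f ∧
      ∀ i j : Fin 4, G.Adj (f i) (f j) ↔ (i.val + 1 = j.val ∨ j.val + 1 = i.val)

inductive Cotree (V : Type u) : Type u where
  | leaf : V → Cotree V
  | node : Bool → List (Cotree V) → Cotree V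

namespace Cotree

variable {V : Type u}

def leaves : Cotree V → List V
  | .leaf v => [v]
  | .node _ ts => ts.attach.flatMap (fun t => t.1.leaves)

decreasing_by simp_wf; have := List.sizeOf_lt_of_mem t.2; omega

def subtrees : Cotree V → List (Cotree V)
  | .leaf v => [.leaf v]
  | .node b ts => .node b ts :: ts.attach.flatMap (fun t => t.1.subtrees)

decreasing_by simp_wf; have := List.sizeOf_lt_of_mem t.2; omega

def children : Cotree V → List (Cotree V)
  | .leaf _ => []
  | .node _ ts => ts

def isSeries : Cotree V → Prop
  | .node true _ => True
  | _ => False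

def isParallel : Cotree V → Prop
  | .node false _ => True
  | _ => False

def adj : Cotree V → V → V → Prop
  | .leaf _, _, _ => False
  | .node b ts, x, y =>
      (∃ t ∈ ts.attach, adj t.1 x y) ∨
      (b = true ∧ ∃ t ∈ ts.attach, ∃ s ∈ ts.attach,
        t.1 ≠ s.1 ∧ x ∈ t.1.leaves ∧ y ∈ s.1.leaves)

decreasing_by simp_wf; have := List.sizeOf_lt_of_mem t.2; omega

def valid : Cotree V → Prop
  | .leaf _ => True
  | .node b ts => 2 ≤ ts.length ∧ ∀ t ∈ ts.attach, valid t.1 ∧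
      ∀ b' ts', t.1 = .node b' ts' → b' ≠ b

decreasing_by simp_wf; have := List.sizeOf_lt_of_mem t.2; omega

def hollow (N : Set V) (t : Cotree V) : Prop := ∀ v ∈ t.leaves, v ∉ N
def full (N : Set V) (t : Cotree V) : Prop := ∀ v ∈ t.leaves, v ∈ N
def uniform (N : Set V) (t : Cotree V) : Prop := full N t ∨ hollow N t
def mixed (N : Set V) (t : Cotree V) : Prop := ¬ uniform N t

def forced (N : Set V) : Cotree V → Prop
  | .leaf v => v ∈ N
  | .node b ts =>
      full N (.node b ts) ∨
      (b = false ∧ ∀ t ∈ ts, ¬ hollow N t) ∨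
      (b = true ∧ ∀ t ∈ ts.attach, forced N t.1)

decreasing_by simp_wf; have := List.sizeOf_lt_of_mem t.2; omega

def eligible (N : Set V) : Cotree V → Cotree V → Prop
  | .leaf v, u => u = .leaf v
  | .node b ts, u => u = .node b ts ∨
      ∃ t ∈ ts.attach, eligible N t.1 u ∧
        (b = false → ∀ s ∈ ts, s ≠ t.1 → hollow N s)

decreasing_by simp_wf; have := List.sizeOf_lt_of_mem t.2; omega

def IsLcaLeaves (T u : Cotree V) (x y : V) : Prop :=
  u ∈ T.subtrees ∧ x ∈ u.leaves ∧ y ∈ u.leaves ∧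
    ∀ c ∈ u.children, ¬ (x ∈ c.leaves ∧ y ∈ c.leaves)

def IsLcaNodeLeaf (T w u : Cotree V) (y : V) : Prop :=
  w ∈ T.subtrees ∧ u ∈ w.subtrees ∧ y ∈ w.leaves ∧
    ∀ c ∈ w.children, ¬ (u ∈ c.subtrees ∧ y ∈ c.leaves)

def graphOf (T : Cotree V) : SimpleGraph V :=
  SimpleGraph.fromRel (fun a b => T.adj a b)

def graphPlus (T : Cotree V) (N : Set V) : SimpleGraph (Option V) :=
  SimpleGraph.fromRel (fun a b =>
    match a, b with
    | some u, some v => T.adj u v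
    | none, some v => v ∈ N
    | _, _ => False)

def IsConstrainedCompletion (T : Cotree V) (Nx N' : Set V) : Prop :=
  Nx ⊆ N' ∧ (∀ v ∈ N', v ∈ T.leaves) ∧ IsCograph (graphPlus T N')

def IsMinimalConstrainedCompletion (T : Cotree V) (Nx N' : Set V) : Prop :=
  IsConstrainedCompletion T Nx N' ∧
    ∀ N'' ⊆ N', IsConstrainedCompletion T Nx N'' → N'' = N'

def IsInsertionNode (T : Cotree V) (N' : Set V) (u : Cotree V) : Prop :=
  u ∈ T.subtrees ∧ mixed N' u ∧ (∀ c ∈ u.children, uniform N' c) ∧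
    ∀ y ∈ T.leaves, y ∉ u.leaves →
      (y ∈ N' ↔ ∃ w, IsLcaNodeLeaf T w u y ∧ w.isSeries)

def IsCMInsertionNode (T : Cotree V) (Nx : Set V) (u : Cotree V) : Prop :=
  ∃ N', IsMinimalConstrainedCompletion T Nx N' ∧ IsInsertionNode T N' u

def anchored (T u : Cotree V) (Nx : Set V) : Set V :=
  Nx ∪ {y | y ∈ T.leaves ∧ y ∉ u.leaves ∧ ∃ w, IsLcaNodeLeaf T w u y ∧ w.isSeries}
     ∪ {y | ∃ c ∈ u.children, ¬ hollow Nx c ∧ y ∈ c.leaves}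


theorem leaves_node (b : Bool) (ts : List (Cotree V)) :
    (Cotree.node b ts).leaves = ts.flatMap Cotree.leaves := by
  rw [leaves]
  simp [List.flatMap, Function.comp]

theorem subtrees_node (b : Bool) (ts : List (Cotree V)) :
    (Cotree.node b ts).subtrees = Cotree.node b ts :: ts.flatMap Cotree.subtrees := by
  rw [subtrees]
  simp [List.flatMap, Function.comp]

theorem adj_node (b : Bool) (ts : List (Cotree V)) (x y : V) :
    (Cotree.node b ts).adj x y ↔
      (∃ t ∈ ts, Cotree.adj t x y) ∨
      (b = true ∧ ∃ t ∈ ts, ∃ s ∈ ts, t ≠ s ∧ x ∈ t.leaves ∧ y ∈ s.leaves) := by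
  rw [adj]
  constructor
  · rintro (⟨⟨t, ht⟩, -, h⟩ | ⟨hb, ⟨t, ht⟩, -, ⟨s, hs⟩, -, h⟩)
    · exact Or.inl ⟨t, ht, h⟩
    · exact Or.inr ⟨hb, t, ht, s, hs, h⟩
  · rintro (⟨t, ht, h⟩ | ⟨hb, t, ht, s, hs, h⟩)
    · exact Or.inl ⟨⟨t, ht⟩, List.mem_attach _ _, h⟩
    · exact Or.inr ⟨hb, ⟨t, ht⟩, List.mem_attach _ _, ⟨s, hs⟩, List.mem_attach _ _, h⟩


theorem adj_mem_leaves : ∀ (T : Cotree V) (a b : V), T.adj a b → a ∈ T.leaves ∧ b ∈ T.leaves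
  | .leaf _, _, _, h => by rw [adj] at h; exact h.elim
  | .node bb ts, a, c, h => by
      rw [adj_node] at h
      rw [leaves_node]
      rcases h with ⟨t, ht, h⟩ | ⟨-, t, ht, s, hs, -, ha, hb2⟩
      · have := adj_mem_leaves t a c h
        exact ⟨List.mem_flatMap.2 ⟨t, ht, this.1⟩, List.mem_flatMap.2 ⟨t, ht, this.2⟩⟩
      · exact ⟨List.mem_flatMap.2 ⟨t, ht, ha⟩, List.mem_flatMap.2 ⟨s, hs, hb2⟩⟩
decreasing_by simp_wf; have := List.sizeOf_lt_of_mem ht; omega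

theorem adj_symm : ∀ (T : Cotree V) (a b : V), T.adj a b → T.adj b a
  | .leaf _, _, _, h => by rw [adj] at h; exact h.elim
  | .node bb ts, a, c, h => by
      rw [adj_node] at h ⊢
      rcases h with ⟨t, ht, h⟩ | ⟨hb, t, ht, s, hs, hne, ha, hb2⟩
      · exact Or.inl ⟨t, ht, adj_symm t a c h⟩
      · exact Or.inr ⟨hb, s, hs, t, ht, hne.symm, hb2, ha⟩
decreasing_by simp_wf; have := List.sizeOf_lt_of_mem ht; omega

theorem self_mem_subtrees : ∀ (T : Cotree V), T ∈ T.subtrees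
  | .leaf v => by rw [subtrees]; exact List.mem_singleton.2 rfl
  | .node b ts => by rw [subtrees_node]; exact List.mem_cons_self

theorem mem_subtrees_node {b : Bool} {ts : List (Cotree V)} {w : Cotree V}
    (h : w ∈ (Cotree.node b ts).subtrees) :
    w = Cotree.node b ts ∨ ∃ t ∈ ts, w ∈ t.subtrees := by
  rw [subtrees_node] at h
  rcases List.mem_cons.1 h with h | h
  · exact Or.inl h
  · obtain ⟨t, ht, hw⟩ := List.mem_flatMap.1 h
    exact Or.inr ⟨t, ht, hw⟩

theorem leaves_subset_of_mem_subtrees :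
    ∀ (T u : Cotree V), u ∈ T.subtrees → ∀ v ∈ u.leaves, v ∈ T.leaves
  | .leaf w, u, hu, v, hv => by
      rw [subtrees] at hu
      rw [List.mem_singleton.1 hu] at hv
      exact hv
  | .node b ts, u, hu, v, hv => by
      rcases mem_subtrees_node hu with h | ⟨t, ht, hw⟩
      · rw [h] at hv; exact hv
      · rw [leaves_node]
        exact List.mem_flatMap.2 ⟨t, ht, leaves_subset_of_mem_subtrees t u hw v hv⟩
termination_by T => sizeOf T
decreasing_by simp_wf; have := List.sizeOf_lt_of_mem ht; omega

theorem subtrees_trans :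
    ∀ (T t w : Cotree V), w ∈ t.subtrees → t ∈ T.subtrees → w ∈ T.subtrees
  | .leaf v, t, w, hw, ht => by
      rw [subtrees] at ht
      rw [List.mem_singleton.1 ht] at hw
      rw [subtrees] at hw ⊢
      exact hw
  | .node b ts, t, w, hw, ht => by
      rcases mem_subtrees_node ht with h | ⟨c, hc, htc⟩
      · rw [h] at hw; exact hw
      · rw [subtrees_node]
        exact List.mem_cons.2 (Or.inr (List.mem_flatMap.2
          ⟨c, hc, subtrees_trans c t w hw htc⟩))
termination_by T => sizeOf T
decreasing_by simp_wf; have := List.sizeOf_lt_of_mem hc; omega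

theorem adj_of_subtree :
    ∀ (T w : Cotree V) (a b : V), w ∈ T.subtrees → w.adj a b → T.adj a b
  | .leaf v, w, a, c, hw, h => by
      rw [subtrees] at hw
      rw [List.mem_singleton.1 hw] at h
      rw [adj] at h
      exact h.elim
  | .node bb ts, w, a, c, hw, h => by
      rcases mem_subtrees_node hw with heq | ⟨t, ht, hwt⟩
      · rw [heq] at h; exact h
      · rw [adj_node]
        exact Or.inl ⟨t, ht, adj_of_subtree t w a c hwt h⟩
termination_by T => sizeOf T
decreasing_by simp_wf; have := List.sizeOf_lt_of_mem ht; omega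


theorem flat_nodup_disjoint {l : List (Cotree V)}
    (hnd : (l.flatMap Cotree.leaves).Nodup) :
    ∀ t1 ∈ l, ∀ t2 ∈ l, ∀ v : V, v ∈ t1.leaves → v ∈ t2.leaves → t1 = t2 := by
  induction l with
  | nil => intro t1 h; exact absurd h List.not_mem_nil
  | cons h tl ih =>
      rw [List.flatMap_cons, List.nodup_append] at hnd
      obtain ⟨-, hrest, hdisj⟩ := hnd
      intro t1 h1 t2 h2 v hv1 hv2
      rcases List.mem_cons.1 h1 with h1 | h1 <;> rcases List.mem_cons.1 h2 with h2 | h2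
      · rw [h1, h2]
      · exact absurd (List.mem_flatMap.2 ⟨t2, h2, hv2⟩) (fun hm => hdisj v (by rw [← h1]; exact hv1) v hm rfl)
      · exact absurd (List.mem_flatMap.2 ⟨t1, h1, hv1⟩) (fun hm => hdisj v (by rw [← h2]; exact hv2) v hm rfl)
      · exact ih hrest t1 h1 t2 h2 v hv1 hv2

theorem flat_nodup_of_mem {l : List (Cotree V)}
    (hnd : (l.flatMap Cotree.leaves).Nodup) {t : Cotree V} (ht : t ∈ l) :
    t.leaves.Nodup := by
  induction l with
  | nil => exact absurd ht List.not_mem_nil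
  | cons h tl ih =>
      rw [List.flatMap_cons, List.nodup_append] at hnd
      rcases List.mem_cons.1 ht with h1 | h1
      · rw [h1]; exact hnd.1
      · exact ih hnd.2.1 h1

theorem valid_of_subtree :
    ∀ (T u : Cotree V), T.valid → u ∈ T.subtrees → u.valid
  | .leaf v, u, hv, hu => by
      rw [subtrees] at hu
      rw [List.mem_singleton.1 hu]
      trivial
  | .node b ts, u, hv, hu => by
      rcases mem_subtrees_node hu with h | ⟨t, ht, hut⟩
      · rw [h]; exact hv
      · rw [valid] at hv
        exact valid_of_subtree t u (hv.2 ⟨t, ht⟩ (List.mem_attach _ _)).1 hut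
termination_by T => sizeOf T
decreasing_by simp_wf; have := List.sizeOf_lt_of_mem ht; omega

theorem leaves_ne_nil : ∀ (T : Cotree V), T.valid → T.leaves ≠ []
  | .leaf v, _ => by rw [leaves]; simp
  | .node b ts, hv => by
      rw [valid] at hv
      rw [leaves_node]
      have hts : ts ≠ [] := by intro hcon; rw [hcon] at hv; simp at hv
      obtain ⟨t, ht⟩ := List.exists_mem_of_ne_nil ts hts
      have hne := leaves_ne_nil t (hv.2 ⟨t, ht⟩ (List.mem_attach _ _)).1
      obtain ⟨w, hw⟩ := List.exists_mem_of_ne_nil t.leaves hne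
      intro hcon
      have : w ∈ ts.flatMap Cotree.leaves := List.mem_flatMap.2 ⟨t, ht, hw⟩
      rw [hcon] at this
      exact List.not_mem_nil this
termination_by T => sizeOf T
decreasing_by simp_wf; have := List.sizeOf_lt_of_mem ht; omega

theorem forced_not_hollow (N : Set V) :
    ∀ (t : Cotree V), t.valid → t.forced N → ¬ t.hollow N
  | .leaf v, _, hf, hh => by
      rw [forced] at hf
      exact hh v (by rw [leaves]; exact List.mem_singleton.2 rfl) hf
  | .node b ts, hv, hf, hh => by
      rw [valid] at hv
      rw [forced] at hf
      have hts : ts ≠ [] := by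
        intro hcon; rw [hcon] at hv; simp at hv
      obtain ⟨t, ht⟩ := List.exists_mem_of_ne_nil ts hts
      have hvt : t.valid := (hv.2 ⟨t, ht⟩ (List.mem_attach _ _)).1
      have hsub : ∀ w ∈ t.leaves, w ∈ (Cotree.node b ts).leaves := by
        intro w hw; rw [leaves_node]; exact List.mem_flatMap.2 ⟨t, ht, hw⟩
      rcases hf with hfull | ⟨-, hall⟩ | ⟨-, hall⟩
      · obtain ⟨w, hw⟩ := List.exists_mem_of_ne_nil t.leaves (leaves_ne_nil t hvt)
        exact hh w (hsub w hw) (hfull w (hsub w hw))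
      · exact hall t ht (fun w hw => hh w (hsub w hw))
      · exact forced_not_hollow N t hvt (hall ⟨t, ht⟩ (List.mem_attach _ _))
          (fun w hw => hh w (hsub w hw))
termination_by t => sizeOf t
decreasing_by simp_wf; have := List.sizeOf_lt_of_mem ht; omega


theorem lca_series_adj {T w u : Cotree V} {y z : V}
    (hw : IsLcaNodeLeaf T w u y) (hws : w.isSeries)
    (hz : z ∈ u.leaves) (hyu : y ∉ u.leaves) : T.adj z y := by
  obtain ⟨hwT, huw, hyw, hch⟩ := hw
  match w, hws with
  | .leaf v, hws => exact hws.elim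
  | .node false ts, hws => exact hws.elim
  | .node true ts, _ =>
    rcases mem_subtrees_node huw with heq | ⟨t, ht, hut⟩
    · exact absurd (by rw [heq]; exact hyw) hyu
    · have hzt : z ∈ t.leaves := leaves_subset_of_mem_subtrees t u hut z hz
      have hyt : y ∉ t.leaves := fun hy => hch t ht ⟨hut, hy⟩
      obtain ⟨s, hs, hys⟩ := List.mem_flatMap.1 (by rw [leaves_node] at hyw; exact hyw)
      have hts : t ≠ s := fun h => hyt (h ▸ hys)
      exact adj_of_subtree T _ z y hwT
        ((adj_node true ts z y).2 (Or.inr ⟨rfl, t, ht, s, hs, hts, hzt, hys⟩))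

theorem adj_lca_series :
    ∀ (T u : Cotree V) (z y : V), T.leaves.Nodup → u ∈ T.subtrees →
      z ∈ u.leaves → y ∉ u.leaves → T.adj z y →
      ∃ w, IsLcaNodeLeaf T w u y ∧ w.isSeries
  | .leaf v, u, z, y, _, _, _, _, h => by rw [adj] at h; exact h.elim
  | .node b ts, u, z, y, hnd, hsub, hz, hyu, h => by
      rcases mem_subtrees_node hsub with heq | ⟨t, ht, hut⟩
      · exact absurd (by rw [heq]; exact (adj_mem_leaves _ z y h).2) hyu
      · have hndf : (ts.flatMap Cotree.leaves).Nodup := by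
          rw [leaves_node] at hnd; exact hnd
        have hzt : z ∈ t.leaves := leaves_subset_of_mem_subtrees t u hut z hz
        rw [adj_node] at h
        rcases h with ⟨t', ht', hadj⟩ | ⟨hb, t1, ht1, t2, ht2, hne, hz1, hy2⟩
        · have heqt : t' = t :=
            flat_nodup_disjoint hndf t' ht' t ht z (adj_mem_leaves t' z y hadj).1 hzt
          subst heqt
          obtain ⟨w, ⟨hwt, huw, hyw, hch⟩, hws⟩ :=
            adj_lca_series t' u z y (flat_nodup_of_mem hndf ht') hut hz hyu hadj
          refine ⟨w, ⟨subtrees_trans _ t' w hwt ?_, huw, hyw, hch⟩, hws⟩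
          rw [subtrees_node]
          exact List.mem_cons.2 (Or.inr (List.mem_flatMap.2 ⟨t', ht', self_mem_subtrees _⟩))
        · subst hb
          refine ⟨Cotree.node true ts, ⟨self_mem_subtrees _, hsub, ?_, ?_⟩, trivial⟩
          · rw [leaves_node]; exact List.mem_flatMap.2 ⟨t2, ht2, hy2⟩
          · rintro c hc ⟨huc, hyc⟩
            have hc2 : c = t2 := flat_nodup_disjoint hndf c hc t2 ht2 y hyc hy2
            have hz2 : z ∈ t2.leaves := by
              rw [← hc2]; exact leaves_subset_of_mem_subtrees c u huc z hz
            exact hne (flat_nodup_disjoint hndf t1 ht1 t2 ht2 z hz1 hz2)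
termination_by T => sizeOf T
decreasing_by simp_wf; have := List.sizeOf_lt_of_mem ht'; omega


theorem graphPlus_adj_some (T : Cotree V) (N : Set V) (a b : V) :
    (graphPlus T N).Adj (some a) (some b) ↔ a ≠ b ∧ (T.adj a b ∨ T.adj b a) := by
  simp [graphPlus, SimpleGraph.fromRel_adj]

theorem graphPlus_adj_none (T : Cotree V) (N : Set V) (v : V) :
    (graphPlus T N).Adj none (some v) ↔ v ∈ N := by
  simp [graphPlus, SimpleGraph.fromRel_adj]


theorem cograph_remove (T u : Cotree V) (N' : Set V)
    (key1 : ∀ y z, y ∈ N' → y ∉ u.leaves → z ∈ u.leaves → T.adj z y)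
    (key2 : ∀ y z, z ∈ u.leaves → y ∉ u.leaves → T.adj z y → y ∈ N')
    (cog : IsCograph (graphPlus T N')) :
    IsCograph (graphPlus T {v | v ∈ N' ∧ v ∉ u.leaves}) := by
  set N'' : Set V := {v | v ∈ N' ∧ v ∉ u.leaves} with hN''
  rintro ⟨f, finj, hf⟩
  have hmemN'' : ∀ v : V, v ∈ N'' ↔ v ∈ N' ∧ v ∉ u.leaves := fun v => Iff.rfl
  by_cases hxr : ∀ j : Fin 4, f j ≠ none
  · apply cog
    refine ⟨f, finj, fun j k => ?_⟩
    rw [← hf j k]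
    obtain ⟨a, ha⟩ : ∃ a, f j = some a := Option.ne_none_iff_exists'.mp (hxr j)
    obtain ⟨b, hb⟩ : ∃ b, f k = some b := Option.ne_none_iff_exists'.mp (hxr k)
    rw [ha, hb, graphPlus_adj_some, graphPlus_adj_some]
  · push_neg at hxr
    obtain ⟨i, hi⟩ := hxr
    have hinj : ∀ j : Fin 4, j ≠ i → ∃ v, f j = some v := by
      intro j hj
      cases hfj : f j with
      | none => exact absurd (finj (hfj.trans hi.symm)) hj
      | some v => exact ⟨v, rfl⟩
    have hconsec : ∀ j k : Fin 4, (j.val + 1 = k.val ∨ k.val + 1 = j.val) →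
        (graphPlus T N'').Adj (f j) (f k) := fun j k h => (hf j k).2 h
    have hnonedge : ∀ j k : Fin 4, ¬(j.val + 1 = k.val ∨ k.val + 1 = j.val) →
        ¬(graphPlus T N'').Adj (f j) (f k) := fun j k h ha => h ((hf j k).1 ha)
    have step2 : ∀ (j k : Fin 4) (v : V), f j = some v → v ∈ u.leaves →
        (i.val + 1 = k.val ∨ k.val + 1 = i.val) →
        ¬(j.val + 1 = k.val ∨ k.val + 1 = j.val) → j ≠ k → False := by
      intro j k v hfj hvl hik hjk hne
      have hki : k ≠ i := by
        intro h; subst h; omega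
      obtain ⟨w, hfk⟩ := hinj k hki
      have hadj := hconsec i k hik
      rw [hi, hfk, graphPlus_adj_none] at hadj
      have hvw : v ≠ w := fun h => hne (finj (by rw [hfj, hfk, h]))
      have : (graphPlus T N'').Adj (f j) (f k) := by
        rw [hfj, hfk, graphPlus_adj_some]
        exact ⟨hvw, Or.inl (key1 w v hadj.1 hadj.2 hvl)⟩
      exact hnonedge j k hjk this
    have hji_nonadj : ∀ (j : Fin 4) (v : V), f j = some v → v ∈ u.leaves →
        ¬(i.val + 1 = j.val ∨ j.val + 1 = i.val) := by
      intro j v hfj hvl h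
      have := hconsec i j h
      rw [hi, hfj, graphPlus_adj_none] at this
      exact this.2 hvl
    have hsel : ∀ a b : Fin 4, a ≠ b → ¬(a.val + 1 = b.val ∨ b.val + 1 = a.val) →
        ¬((a.val = 0 ∧ b.val = 2) ∨ (a.val = 3 ∧ b.val = 1)) →
        ∃ k : Fin 4, (a.val + 1 = k.val ∨ k.val + 1 = a.val) ∧
          ¬(b.val + 1 = k.val ∨ k.val + 1 = b.val) ∧ b ≠ k := by decide
    have hnl1 : ∀ (j : Fin 4) (v : V), f j = some v → v ∈ u.leaves →
        ((i.val = 0 ∧ j.val = 2) ∨ (i.val = 3 ∧ j.val = 1)) := by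
      intro j v hfj hvl
      have h1 := hji_nonadj j v hfj hvl
      have hji : j ≠ i := by
        intro h; rw [h, hi] at hfj; cases hfj
      by_contra hcon
      obtain ⟨k, hk1, hk2, hk3⟩ := hsel i j (Ne.symm hji) h1 hcon
      exact step2 j k v hfj hvl hk1 hk2 hk3
    have hnl : ∀ (j : Fin 4) (v : V), f j = some v → v ∉ u.leaves := by
      intro j v hfj hvl
      rcases hnl1 j v hfj hvl with ⟨hi0, hj2⟩ | ⟨hi3, hj1⟩
      · obtain ⟨v3, hf3⟩ := hinj 3 (by intro h; rw [← h] at hi0; exact absurd hi0 (by decide))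
        have hv3l : v3 ∉ u.leaves := by
          intro h
          rcases hnl1 3 v3 hf3 h with ⟨-, h2⟩ | ⟨h3, -⟩
          · exact absurd h2 (by decide)
          · omega
        have hnon03 := hnonedge i 3 (by
          have : (3 : Fin 4).val = 3 := rfl
          omega)
        rw [hi, hf3, graphPlus_adj_none] at hnon03
        have hv3N : v3 ∉ N' := fun h => hnon03 ⟨h, hv3l⟩
        have hedge := hconsec j 3 (by
          have : (3 : Fin 4).val = 3 := rfl
          omega)
        rw [hfj, hf3, graphPlus_adj_some] at hedge
        have hadj' : T.adj v v3 := hedge.2.elim id (adj_symm T v3 v)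
        exact hv3N (key2 v3 v hvl hv3l hadj')
      · obtain ⟨v0, hf0⟩ := hinj 0 (by intro h; rw [← h] at hi3; exact absurd hi3 (by decide))
        have hv0l : v0 ∉ u.leaves := by
          intro h
          rcases hnl1 0 v0 hf0 h with ⟨h0, -⟩ | ⟨-, h2⟩
          · omega
          · exact absurd h2 (by decide)
        have hnon30 := hnonedge i 0 (by
          have : (0 : Fin 4).val = 0 := rfl
          omega)
        rw [hi, hf0, graphPlus_adj_none] at hnon30
        have hv0N : v0 ∉ N' := fun h => hnon30 ⟨h, hv0l⟩
        have hedge := hconsec j 0 (by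
          have : (0 : Fin 4).val = 0 := rfl
          omega)
        rw [hfj, hf0, graphPlus_adj_some] at hedge
        have hadj' : T.adj v v0 := hedge.2.elim id (adj_symm T v0 v)
        exact hv0N (key2 v0 v hvl hv0l hadj')
    apply cog
    refine ⟨f, finj, fun j k => ?_⟩
    rw [← hf j k]
    by_cases hj : j = i <;> by_cases hk : k = i
    · subst hj; subst hk; simp
    · obtain ⟨v, hfk⟩ := hinj k hk
      subst hj
      rw [hi, hfk, graphPlus_adj_none, graphPlus_adj_none]
      exact ⟨fun h => ⟨h, hnl k v hfk⟩, fun h => h.1⟩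
    · obtain ⟨v, hfj2⟩ := hinj j hj
      subst hk
      rw [SimpleGraph.adj_comm, SimpleGraph.adj_comm (graphPlus T N'')]
      rw [hi, hfj2, graphPlus_adj_none, graphPlus_adj_none]
      exact ⟨fun h => ⟨h, hnl j v hfj2⟩, fun h => h.1⟩
    · obtain ⟨a, hfj2⟩ := hinj j hj
      obtain ⟨b, hfk⟩ := hinj k hk
      rw [hfj2, hfk, graphPlus_adj_some, graphPlus_adj_some]

end Cotree

theorem stmt_13 {V : Type u} (T : Cotree V) (Nx : Set V)
    (hval : T.valid) (hnd : T.leaves.Nodup)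
    (hNx : ∀ v ∈ Nx, v ∈ T.leaves) (hmix : Cotree.mixed Nx T)
    (N' : Set V) (hmin : Cotree.IsMinimalConstrainedCompletion T Nx N')
    (u : Cotree V) (hins : Cotree.IsInsertionNode T N' u) :
    (∃ c ∈ u.children, Cotree.hollow Nx c) ∧ (∃ c ∈ u.children, ¬ Cotree.hollow Nx c) ∧
      ¬ Cotree.hollow Nx u ∧ ¬ Cotree.forced Nx u := by
  obtain ⟨⟨hNxN', hN'l, hcog⟩, hminim⟩ := hmin
  obtain ⟨huT, humix, hunif, hlca⟩ := hins
  cases u with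
  | leaf v =>
      exfalso
      apply humix
      by_cases hv : v ∈ N'
      · exact Or.inl (fun w hw => by
          rw [Cotree.leaves] at hw
          rw [List.mem_singleton.1 hw]; exact hv)
      · exact Or.inr (fun w hw => by
          rw [Cotree.leaves] at hw
          rw [List.mem_singleton.1 hw]; exact hv)
  | node b ts =>
      have hleq : (Cotree.node b ts).leaves = ts.flatMap Cotree.leaves :=
        Cotree.leaves_node b ts
      have hnfull : ¬ Cotree.full N' (Cotree.node b ts) := fun h => humix (Or.inl h)
      have hnhol' : ¬ Cotree.hollow N' (Cotree.node b ts) := fun h => humix (Or.inr h)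
      obtain ⟨a, hal, haN⟩ : ∃ a ∈ (Cotree.node b ts).leaves, a ∉ N' := by
        by_contra h; push_neg at h; exact hnfull h
      obtain ⟨a2, ha2l, ha2N⟩ : ∃ a ∈ (Cotree.node b ts).leaves, a ∈ N' := by
        by_contra h; push_neg at h; exact hnhol' h
      obtain ⟨c, hc, hac⟩ := List.mem_flatMap.1 (hleq ▸ hal)
      have hchol : Cotree.hollow N' c :=
        (hunif c hc).resolve_left (fun hfull => haN (hfull a hac))
      have c1 : ∃ c ∈ ts, Cotree.hollow Nx c :=
        ⟨c, hc, fun w hw hwN => hchol w hw (hNxN' hwN)⟩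
      have c3 : ¬ Cotree.hollow Nx (Cotree.node b ts) := by
        intro hhol
        have key1 : ∀ y z, y ∈ N' → y ∉ (Cotree.node b ts).leaves →
            z ∈ (Cotree.node b ts).leaves → T.adj z y := by
          intro y z hyN hyu hz
          obtain ⟨w, hw, hws⟩ := (hlca y (hN'l y hyN) hyu).mp hyN
          exact Cotree.lca_series_adj hw hws hz hyu
        have key2 : ∀ y z, z ∈ (Cotree.node b ts).leaves →
            y ∉ (Cotree.node b ts).leaves → T.adj z y → y ∈ N' := by
          intro y z hz hyu hadj
          have hyT : y ∈ T.leaves := (Cotree.adj_mem_leaves T z y hadj).2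
          exact (hlca y hyT hyu).mpr
            (Cotree.adj_lca_series T (Cotree.node b ts) z y hnd huT hz hyu hadj)
        have hcog'' := Cotree.cograph_remove T (Cotree.node b ts) N' key1 key2 hcog
        have hcomp : Cotree.IsConstrainedCompletion T Nx
            {v | v ∈ N' ∧ v ∉ (Cotree.node b ts).leaves} :=
          ⟨fun v hv => ⟨hNxN' hv, fun hl => hhol v hl hv⟩, fun v hv => hN'l v hv.1, hcog''⟩
        have heq := hminim _ (fun v hv => hv.1) hcomp
        have : a2 ∈ {v | v ∈ N' ∧ v ∉ (Cotree.node b ts).leaves} := by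
          rw [heq]; exact ha2N
        exact this.2 ha2l
      obtain ⟨w, hwl, hwN⟩ : ∃ w ∈ (Cotree.node b ts).leaves, w ∈ Nx := by
        by_contra h; push_neg at h; exact c3 h
      obtain ⟨c2, hc2, hwc2⟩ := List.mem_flatMap.1 (hleq ▸ hwl)
      have c2conj : ∃ c ∈ ts, ¬ Cotree.hollow Nx c :=
        ⟨c2, hc2, fun hholc => hholc w hwc2 hwN⟩
      refine ⟨c1, c2conj, c3, ?_⟩
      have hvalu : (Cotree.node b ts).valid := Cotree.valid_of_subtree T _ hval huT
      intro hforced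
      rw [Cotree.forced] at hforced
      rw [Cotree.valid] at hvalu
      obtain ⟨c', hc', hchx⟩ := c1
      have hvc : c'.valid := (hvalu.2 ⟨c', hc'⟩ (List.mem_attach _ _)).1
      rcases hforced with hfull | ⟨-, hall⟩ | ⟨-, hall⟩
      · obtain ⟨w', hw'⟩ := List.exists_mem_of_ne_nil c'.leaves (Cotree.leaves_ne_nil c' hvc)
        have hw'l : w' ∈ (Cotree.node b ts).leaves := by
          rw [hleq]; exact List.mem_flatMap.2 ⟨c', hc', hw'⟩
        exact hchx w' hw' (hfull w' hw'l)
      · exact hall c' hc' hchx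
      · exact Cotree.forced_not_hollow Nx c' hvc
          (hall ⟨c', hc'⟩ (List.mem_attach _ _)) hchx
end

section
/- Let G be a cograph with cotree T, x a new vertex with completed neighbourhood N'(x) of size d' in some constrained cograph completion H of G+x with insertion node u. Then the number of non-hollow nodes of T (nodes v with V(v) ∩ N(x) ≠ ∅) is O(d'). -/
universe u

namespace CotreeAux

open Cotree List

variable {V : Type}

lemma attach_flatMap {α β : Type*} (l : List α) (f : α → List β) :
    l.attach.flatMap (fun x => f x.1) = l.flatMap f := by
  conv_rhs => rw [← List.attach_map_subtype_val l, List.flatMap_map]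

lemma leaves_node (b : Bool) (ts : List (Cotree V)) :
    (Cotree.node b ts).leaves = ts.flatMap Cotree.leaves := by
  rw [Cotree.leaves]; exact attach_flatMap ts Cotree.leaves

lemma subtrees_node (b : Bool) (ts : List (Cotree V)) :
    (Cotree.node b ts).subtrees = Cotree.node b ts :: ts.flatMap Cotree.subtrees := by
  rw [Cotree.subtrees]; rw [attach_flatMap ts Cotree.subtrees]

lemma mem_leaves_node {y : V} {b : Bool} {ts : List (Cotree V)} :
    y ∈ (Cotree.node b ts).leaves ↔ ∃ c ∈ ts, y ∈ c.leaves := by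
  rw [leaves_node, List.mem_flatMap]

lemma mem_subtrees_node {w : Cotree V} {b : Bool} {ts : List (Cotree V)} :
    w ∈ (Cotree.node b ts).subtrees ↔ w = Cotree.node b ts ∨ ∃ c ∈ ts, w ∈ c.subtrees := by
  rw [subtrees_node, List.mem_cons, List.mem_flatMap]

lemma self_mem_subtrees (t : Cotree V) : t ∈ t.subtrees := by
  cases t with
  | leaf v => simp [Cotree.subtrees]
  | node b ts => rw [subtrees_node]; exact List.mem_cons_self

lemma mem_subtrees_leaf {w : Cotree V} {v : V} :
    w ∈ (Cotree.leaf v).subtrees ↔ w = Cotree.leaf v := by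
  simp [Cotree.subtrees]

lemma sizeOf_le_of_mem_subtrees : ∀ {t s : Cotree V}, s ∈ t.subtrees → sizeOf s ≤ sizeOf t
  | .leaf v, s, h => by rw [mem_subtrees_leaf] at h; subst h; exact le_refl _
  | .node b ts, s, h => by
      rw [mem_subtrees_node] at h
      rcases h with rfl | ⟨c, hc, hs⟩
      · exact le_refl _
      · have h1 : sizeOf s ≤ sizeOf c := sizeOf_le_of_mem_subtrees hs
        have h2 := List.sizeOf_lt_of_mem hc
        simp only [Cotree.node.sizeOf_spec]; omega

lemma eq_or_sizeOf_lt_of_mem_subtrees : ∀ {t s : Cotree V}, s ∈ t.subtrees →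
    s = t ∨ sizeOf s < sizeOf t
  | .leaf v, s, h => by rw [mem_subtrees_leaf] at h; exact Or.inl h
  | .node b ts, s, h => by
      rw [mem_subtrees_node] at h
      rcases h with rfl | ⟨c, hc, hs⟩
      · exact Or.inl rfl
      · right
        have h1 : sizeOf s ≤ sizeOf c := sizeOf_le_of_mem_subtrees hs
        have h2 := List.sizeOf_lt_of_mem hc
        simp only [Cotree.node.sizeOf_spec]; omega

lemma mem_subtrees_trans : ∀ {r t s : Cotree V}, s ∈ t.subtrees → t ∈ r.subtrees →
    s ∈ r.subtrees
  | .leaf v, t, s, hs, ht => by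
      rw [mem_subtrees_leaf] at ht; subst ht; exact hs
  | .node b ts, t, s, hs, ht => by
      rw [mem_subtrees_node] at ht ⊢
      rcases ht with rfl | ⟨c, hc, htc⟩
      · rw [← mem_subtrees_node]; exact hs
      · exact Or.inr ⟨c, hc, mem_subtrees_trans hs htc⟩

lemma subtrees_antisymm {t s : Cotree V} (h1 : s ∈ t.subtrees) (h2 : t ∈ s.subtrees) : s = t := by
  rcases eq_or_sizeOf_lt_of_mem_subtrees h1 with h | h
  · exact h
  · rcases eq_or_sizeOf_lt_of_mem_subtrees h2 with h' | h'
    · exact h'.symm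
    · omega

lemma leaves_subset_of_mem : ∀ {t s : Cotree V}, s ∈ t.subtrees → ∀ {y}, y ∈ s.leaves →
    y ∈ t.leaves
  | .leaf v, s, hs, y, hy => by rw [mem_subtrees_leaf] at hs; subst hs; exact hy
  | .node b ts, s, hs, y, hy => by
      rw [mem_subtrees_node] at hs
      rcases hs with rfl | ⟨c, hc, hsc⟩
      · exact hy
      · exact mem_leaves_node.2 ⟨c, hc, leaves_subset_of_mem hsc hy⟩

lemma valid_node_iff {b : Bool} {ts : List (Cotree V)} :
    (Cotree.node b ts).valid ↔ 2 ≤ ts.length ∧ ∀ t ∈ ts, t.valid ∧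
      ∀ b' ts', t = Cotree.node b' ts' → b' ≠ b := by
  rw [Cotree.valid]
  constructor
  · rintro ⟨h1, h2⟩
    exact ⟨h1, fun t ht => h2 ⟨t, ht⟩ (List.mem_attach _ _)⟩
  · rintro ⟨h1, h2⟩
    exact ⟨h1, fun t _ => h2 t.1 t.2⟩

lemma valid_of_mem : ∀ {t s : Cotree V}, t.valid → s ∈ t.subtrees → s.valid
  | .leaf v, s, hv, hs => by rw [mem_subtrees_leaf] at hs; subst hs; trivial
  | .node b ts, s, hv, hs => by
      rw [mem_subtrees_node] at hs
      rcases hs with rfl | ⟨c, hc, hsc⟩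
      · exact hv
      · exact valid_of_mem ((valid_node_iff.1 hv).2 c hc).1 hsc

lemma leaves_ne_nil : ∀ {t : Cotree V}, t.valid → t.leaves ≠ []
  | .leaf v, _ => by simp [Cotree.leaves]
  | .node b ts, hv => by
      rw [valid_node_iff] at hv
      obtain ⟨c, hc⟩ : ∃ c, c ∈ ts := by
        cases ts with
        | nil => exact absurd hv.1 (by simp)
        | cons a l => exact ⟨a, List.mem_cons_self⟩
      have hne := leaves_ne_nil (hv.2 c hc).1
      intro h
      rcases List.exists_mem_of_ne_nil _ hne with ⟨y, hy⟩
      have : y ∈ (Cotree.node b ts).leaves := mem_leaves_node.2 ⟨c, hc, hy⟩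
      rw [h] at this; exact absurd this (List.not_mem_nil)

end CotreeAux

namespace CotreeAux

open Cotree List

variable {V : Type}

lemma leaves_disjoint {b : Bool} {ts : List (Cotree V)}
    (hnd : (Cotree.node b ts).leaves.Nodup) {c c' : Cotree V} (hc : c ∈ ts) (hc' : c' ∈ ts)
    (hne : c ≠ c') {y : V} (hy : y ∈ c.leaves) : y ∉ c'.leaves := by
  rw [leaves_node, List.nodup_flatMap] at hnd
  have hp := by haveI : Std.Symm (Function.onFun List.Disjoint (leaves : Cotree V → List V)) := ⟨fun a b h => List.Disjoint.symm h⟩; exact hnd.2.forall hc hc' hne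
  exact fun hy' => hp hy hy'

lemma leaves_nodup_of_mem : ∀ {t s : Cotree V}, t.leaves.Nodup → s ∈ t.subtrees →
    s.leaves.Nodup
  | .leaf v, s, hnd, hs => by rw [mem_subtrees_leaf] at hs; subst hs; exact hnd
  | .node b ts, s, hnd, hs => by
      rw [mem_subtrees_node] at hs
      rcases hs with rfl | ⟨c, hc, hsc⟩
      · exact hnd
      · have h2 : c.leaves.Nodup := by
          rw [leaves_node, List.nodup_flatMap] at hnd
          exact hnd.1 c hc
        exact leaves_nodup_of_mem h2 hsc

lemma children_nodup {b : Bool} {ts : List (Cotree V)}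
    (hv : (Cotree.node b ts).valid) (hnd : (Cotree.node b ts).leaves.Nodup) : ts.Nodup := by
  rw [leaves_node, List.nodup_flatMap] at hnd
  refine hnd.2.imp_of_mem ?_
  intro a c ha hc hdis
  intro h
  subst h
  have hne := leaves_ne_nil ((valid_node_iff.1 hv).2 a ha).1
  rcases List.exists_mem_of_ne_nil _ hne with ⟨y, hy⟩
  exact hdis hy hy

/-- If two subtrees share a leaf, one contains the other. -/
lemma subtrees_comparable : ∀ {t w s : Cotree V}, t.leaves.Nodup →
    w ∈ t.subtrees → s ∈ t.subtrees → ∀ {y : V}, y ∈ w.leaves → y ∈ s.leaves →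
    w ∈ s.subtrees ∨ s ∈ w.subtrees
  | .leaf v, w, s, hnd, hw, hs, y, hyw, hys => by
      rw [mem_subtrees_leaf] at hw hs
      subst hw; subst hs; exact Or.inl (self_mem_subtrees _)
  | .node b ts, w, s, hnd, hw, hs, y, hyw, hys => by
      rw [mem_subtrees_node] at hw hs
      rcases hw with rfl | ⟨c, hc, hwc⟩
      · rcases hs with rfl | ⟨c, hc, hsc⟩
        · exact Or.inl (self_mem_subtrees _)
        · exact Or.inr (mem_subtrees_node.2 (Or.inr ⟨c, hc, hsc⟩))
      · rcases hs with rfl | ⟨c', hc', hsc⟩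
        · exact Or.inl (mem_subtrees_node.2 (Or.inr ⟨c, hc, hwc⟩))
        · have hcc : c = c' := by
            by_contra hne
            exact leaves_disjoint hnd hc hc' hne (leaves_subset_of_mem hwc hyw)
              (leaves_subset_of_mem hsc hys)
          subst hcc
          have h2 : c.leaves.Nodup :=
            leaves_nodup_of_mem hnd (mem_subtrees_node.2 (Or.inr ⟨c, hc, self_mem_subtrees c⟩))
          exact subtrees_comparable h2 hwc hsc hyw hys

/-- uniqueness of the child containing a fixed nonempty subtree u -/
lemma uchild_unique {b : Bool} {ts : List (Cotree V)}
    (hnd : (Cotree.node b ts).leaves.Nodup) {u c c' : Cotree V}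
    (hu : u.leaves ≠ []) (hc : c ∈ ts) (hc' : c' ∈ ts)
    (h1 : u ∈ c.subtrees) (h2 : u ∈ c'.subtrees) : c = c' := by
  by_contra hne
  rcases List.exists_mem_of_ne_nil _ hu with ⟨y, hy⟩
  exact leaves_disjoint hnd hc hc' hne (leaves_subset_of_mem h1 hy)
    (leaves_subset_of_mem h2 hy)

lemma subtrees_nodup : ∀ {t : Cotree V}, t.valid → t.leaves.Nodup → t.subtrees.Nodup
  | .leaf v, _, _ => by simp [Cotree.subtrees]
  | .node b ts, hv, hnd => by
      rw [subtrees_node, List.nodup_cons]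
      constructor
      · intro h
        rcases List.mem_flatMap.1 h with ⟨c, hc, hmem⟩
        have h1 := sizeOf_le_of_mem_subtrees hmem
        have h2 := List.sizeOf_lt_of_mem hc
        simp only [Cotree.node.sizeOf_spec] at h1
        omega
      · rw [List.nodup_flatMap]
        constructor
        · intro c hc
          exact subtrees_nodup ((valid_node_iff.1 hv).2 c hc).1
            (leaves_nodup_of_mem hnd (mem_subtrees_node.2 (Or.inr ⟨c, hc, self_mem_subtrees c⟩)))
        · have hpd : List.Pairwise (fun a b => ∀ y, y ∈ a.leaves → y ∉ b.leaves) ts := by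
            rw [leaves_node, List.nodup_flatMap] at hnd
            exact hnd.2.imp (fun h y hy hy' => h hy hy')
          refine hpd.imp_of_mem ?_
          intro a c ha hc hdis s hs hs'
          have hne := leaves_ne_nil (valid_of_mem ((valid_node_iff.1 hv).2 a ha).1 hs)
          rcases List.exists_mem_of_ne_nil _ hne with ⟨y, hy⟩
          exact hdis y (leaves_subset_of_mem hs hy) (leaves_subset_of_mem hs' hy)

end CotreeAux

namespace CotreeAux

open Cotree List

variable {V : Type}

/-- classical Bool-valued predicate -/
noncomputable def cP {α : Type*} (p : α → Prop) : α → Bool :=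
  fun a => @decide (p a) (Classical.propDecidable _)

@[simp] lemma cP_eq_true_iff {α : Type*} (p : α → Prop) (a : α) : cP p a = true ↔ p a := by
  unfold cP; exact @decide_eq_true_iff (p a) (Classical.propDecidable _)

lemma countP_or_le {α : Type*} (p q : α → Bool) (l : List α) :
    l.countP (fun a => p a || q a) ≤ l.countP p + l.countP q := by
  induction l with
  | nil => simp
  | cons a l ih =>
      simp only [List.countP_cons]
      by_cases hp : p a = true <;> by_cases hq : q a = true <;>
        simp [hp, hq] <;> omega

lemma sum_map_le_single {α : Type*} (g : α → ℕ) :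
    ∀ (ts : List α), ts.Nodup → ∀ c ∈ ts, (∀ c' ∈ ts, c' ≠ c → g c' = 0) →
      (ts.map g).sum ≤ g c := by
  intro ts
  induction ts with
  | nil => intro _ c hc; exact absurd hc (List.not_mem_nil)
  | cons a l ih =>
      intro hnd c hc h0
      rcases List.mem_cons.1 hc with rfl | hcl
      · have : ∀ b ∈ l, g b = 0 := by
          intro b hb
          exact h0 b (List.mem_cons_of_mem _ hb) (fun h => (List.nodup_cons.1 hnd).1 (h ▸ hb))
        have hsum : (l.map g).sum = 0 := by
          apply List.sum_eq_zero
          intro x hx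
          rcases List.mem_map.1 hx with ⟨b, hb, rfl⟩
          exact this b hb
        simp [hsum]
      · have ha : g a = 0 := h0 a (List.mem_cons_self)
          (fun h => (List.nodup_cons.1 hnd).1 (h ▸ hcl))
        simp only [List.map_cons, List.sum_cons, ha, Nat.zero_add]
        exact ih (List.nodup_cons.1 hnd).2 c hcl
          (fun c' hc' => h0 c' (List.mem_cons_of_mem _ hc'))

lemma le_sum_map {α : Type*} (g : α → ℕ) (ts : List α) {c : α} (hc : c ∈ ts) :
    g c ≤ (ts.map g).sum :=
  List.le_sum_of_mem (List.mem_map.2 ⟨c, hc, rfl⟩)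

lemma sum_one_le {α : Type*} (g h : α → ℕ) :
    ∀ (l : List α), (∀ a ∈ l, g a = 0 ∨ g a + 1 ≤ h a) →
      (l.map g).sum = 0 ∨ (l.map g).sum + 1 ≤ (l.map h).sum := by
  intro l
  induction l with
  | nil => intro _; exact Or.inl rfl
  | cons a l ih =>
      intro hp
      have ha := hp a (List.mem_cons_self)
      have hl := ih (fun b hb => hp b (List.mem_cons_of_mem _ hb))
      simp only [List.map_cons, List.sum_cons]
      rcases ha with ha | ha <;> rcases hl with hl | hl
      · left; omega
      · right; omega
      · right; omega
      · right; omega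

lemma sum_add_length_le {α : Type*} (g h : α → ℕ) :
    ∀ (l : List α), (∀ a ∈ l, g a + 1 ≤ h a) →
      (l.map g).sum + l.length ≤ (l.map h).sum := by
  intro l
  induction l with
  | nil => intro _; simp
  | cons a l ih =>
      intro hp
      have ha := hp a (List.mem_cons_self)
      have hl := ih (fun b hb => hp b (List.mem_cons_of_mem _ hb))
      simp only [List.map_cons, List.sum_cons, List.length_cons]
      omega

lemma two_mul_sum {α : Type*} (k : α → ℕ) (l : List α) :
    (l.map (fun a => 2 * k a)).sum = 2 * (l.map k).sum := by
  induction l with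
  | nil => simp
  | cons a l ih => simp [ih]; ring

lemma ncard_eq_countP {α : Type} (l : List α) (hnd : l.Nodup) (p : α → Prop) :
    {a | a ∈ l ∧ p a}.ncard = l.countP (cP p) := by
  classical
  have h1 : {a | a ∈ l ∧ p a} = ↑((l.filter (cP p)).toFinset) := by
    ext a
    simp only [List.coe_toFinset, Set.mem_setOf_eq, List.mem_filter, cP_eq_true_iff]
  rw [h1, Set.ncard_coe_finset, List.toFinset_card_of_nodup (hnd.filter _),
    List.countP_eq_length_filter]

lemma finite_setOf_mem_list {α : Type} (l : List α) (p : α → Prop) :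
    {a | a ∈ l ∧ p a}.Finite :=
  Set.Finite.subset (List.finite_toSet l) (fun a ha => ha.1)

end CotreeAux

namespace CotreeAux

open Cotree List

variable {V : Type}

theorem anc_count : ∀ (t u : Cotree V), t.valid → t.leaves.Nodup → u ∈ t.subtrees →
    u.leaves ≠ [] →
    (t.subtrees.countP (cP (fun w => u ∈ w.subtrees)) ≤
      2 * t.subtrees.countP (cP (fun a => u ∈ a.subtrees ∧ a ≠ u ∧ a.isSeries)) + 2)
    ∧ (t.isSeries ∨ t = u →
       t.subtrees.countP (cP (fun w => u ∈ w.subtrees)) ≤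
         2 * t.subtrees.countP (cP (fun a => u ∈ a.subtrees ∧ a ≠ u ∧ a.isSeries)) + 1)
  | .leaf v, u, hv, hnd, hu, hune => by
      rw [mem_subtrees_leaf] at hu
      subst hu
      have h1 : (Cotree.leaf v : Cotree V).subtrees = [Cotree.leaf v] := by
        simp [Cotree.subtrees]
      rw [h1]
      simp only [List.countP_cons, List.countP_nil, cP_eq_true_iff]
      have h2 : (Cotree.leaf v : Cotree V) ∈ (Cotree.leaf v : Cotree V).subtrees :=
        self_mem_subtrees _
      simp [h2]
  | .node b ts, u, hv, hnd, hu, hune => by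
      set t := Cotree.node b ts with ht
      by_cases hteq : t = u
      · -- u is the root
        have hflat : (ts.flatMap Cotree.subtrees).countP (cP (fun w => u ∈ w.subtrees)) = 0 := by
          rw [List.countP_eq_zero]
          intro w hw hpw
          rw [cP_eq_true_iff] at hpw
          rcases List.mem_flatMap.1 hw with ⟨c, hc, hwc⟩
          have h1 := sizeOf_le_of_mem_subtrees hpw
          have h2 := sizeOf_le_of_mem_subtrees hwc
          have h3 := List.sizeOf_lt_of_mem hc
          rw [← hteq] at h1
          simp only [ht, Cotree.node.sizeOf_spec] at h1
          omega
        have hpa : cP (fun w => u ∈ w.subtrees) t = true := by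
          rw [cP_eq_true_iff]; rw [hteq]; exact self_mem_subtrees _
        rw [ht] at hpa
        have hA : t.subtrees.countP (cP (fun w => u ∈ w.subtrees)) = 1 := by
          rw [ht, subtrees_node, List.countP_cons, hflat, hpa]
          simp
        refine ⟨by omega, fun _ => by omega⟩
      · -- u is strictly below
        have hu' := hu
        rw [ht, mem_subtrees_node] at hu'
        rcases hu' with heq | ⟨c, hc, huc⟩
        · exact absurd heq.symm hteq
        have hvt := valid_node_iff.1 (ht ▸ hv)
        have hvc := (hvt.2 c hc).1
        have hndts : ts.Nodup := children_nodup (ht ▸ hv) (ht ▸ hnd)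
        have hcmem : c ∈ t.subtrees := by
          rw [ht, mem_subtrees_node]; exact Or.inr ⟨c, hc, self_mem_subtrees c⟩
        have hndc : c.leaves.Nodup := leaves_nodup_of_mem (ht ▸ hnd) (ht ▸ hcmem)
        have IH := anc_count c u hvc hndc huc hune
        -- upper bound for the ancestor count over the flatMap
        have hfa : (ts.flatMap Cotree.subtrees).countP (cP (fun w => u ∈ w.subtrees)) ≤
            c.subtrees.countP (cP (fun w => u ∈ w.subtrees)) := by
          rw [List.countP_flatMap]
          exact sum_map_le_single _ ts hndts c hc (by
            intro c' hc' hne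
            simp only [Function.comp_apply]
            rw [List.countP_eq_zero]
            intro w hw hpw
            rw [cP_eq_true_iff] at hpw
            have : u ∈ c'.subtrees := mem_subtrees_trans hpw hw
            exact hne (uchild_unique (ht ▸ hnd) hune hc' hc this huc))
        -- lower bound for the series count
        have hfs : c.subtrees.countP (cP (fun a => u ∈ a.subtrees ∧ a ≠ u ∧ a.isSeries)) ≤
            (ts.flatMap Cotree.subtrees).countP
              (cP (fun a => u ∈ a.subtrees ∧ a ≠ u ∧ a.isSeries)) := by
          rw [List.countP_flatMap]
          exact le_sum_map (fun x =>
            (Cotree.subtrees x).countP (cP (fun a => u ∈ a.subtrees ∧ a ≠ u ∧ a.isSeries))) ts hc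
        have hA : t.subtrees.countP (cP (fun w => u ∈ w.subtrees)) =
            (ts.flatMap Cotree.subtrees).countP (cP (fun w => u ∈ w.subtrees)) +
              (if cP (fun w => u ∈ w.subtrees) t = true then 1 else 0) := by
          rw [ht, subtrees_node, List.countP_cons]
        have hS : t.subtrees.countP (cP (fun a => u ∈ a.subtrees ∧ a ≠ u ∧ a.isSeries)) =
            (ts.flatMap Cotree.subtrees).countP
              (cP (fun a => u ∈ a.subtrees ∧ a ≠ u ∧ a.isSeries)) +
              (if cP (fun a => u ∈ a.subtrees ∧ a ≠ u ∧ a.isSeries) t = true then 1 else 0) := by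
          rw [ht, subtrees_node, List.countP_cons]
        cases b with
        | true =>
            have hps : cP (fun a => u ∈ a.subtrees ∧ a ≠ u ∧ a.isSeries) t = true := by
              rw [cP_eq_true_iff]
              refine ⟨ht ▸ hu, fun h => hteq h, ?_⟩
              rw [ht]; trivial
            rw [hps] at hS
            simp only [if_true] at hS
            have h1 := IH.1
            have hpa : (if cP (fun w => u ∈ w.subtrees) t = true then 1 else 0) ≤ 1 := by
              split <;> omega
            constructor
            · omega
            · intro _; omega
        | false =>
            have hcs : c.isSeries ∨ c = u := by
              cases c with
              | leaf w => right; rw [mem_subtrees_leaf] at huc; exact huc.symm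
              | node b' ls =>
                  cases b' with
                  | false => exact absurd rfl ((hvt.2 _ hc).2 false ls rfl)
                  | true => left; trivial
            have h1 := IH.2 hcs
            have hbr : ¬ (t.isSeries ∨ t = u) := by
              rintro (h | h)
              · rw [ht] at h; exact h
              · exact hteq h
            have hpa : (if cP (fun w => u ∈ w.subtrees) t = true then 1 else 0) ≤ 1 := by
              split <;> omega
            have hge : 0 ≤ (if cP (fun a => u ∈ a.subtrees ∧ a ≠ u ∧ a.isSeries) t = true
                then 1 else 0) := Nat.zero_le _
            constructor
            · omega
            · intro h; exact absurd h hbr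
  termination_by t u hv hnd hu hune => sizeOf t
  decreasing_by simp_wf; have := List.sizeOf_lt_of_mem hc; omega

theorem full_count (N' : Set V) : ∀ (t : Cotree V), t.valid → t.leaves.Nodup →
    t.subtrees.countP (cP (Cotree.full N')) = 0 ∨
    t.subtrees.countP (cP (Cotree.full N')) + 1 ≤ 2 * t.leaves.countP (cP (· ∈ N'))
  | .leaf v, hv, hnd => by
      have h1 : (Cotree.leaf v : Cotree V).subtrees = [Cotree.leaf v] := by
        simp [Cotree.subtrees]
      have h2 : (Cotree.leaf v : Cotree V).leaves = [v] := by
        simp [Cotree.leaves]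
      rw [h1, h2]
      simp only [List.countP_cons, List.countP_nil, cP_eq_true_iff]
      by_cases hvN : v ∈ N'
      · right
        have hfull : Cotree.full N' (Cotree.leaf v : Cotree V) := by
          intro y hy
          rw [h2] at hy
          rcases List.mem_singleton.1 hy with rfl
          exact hvN
        simp [hfull, hvN]
      · left
        have hnf : ¬ Cotree.full N' (Cotree.leaf v : Cotree V) := by
          intro h
          exact hvN (h v (by rw [h2]; exact List.mem_singleton_self v))
        simp [hnf]
  | .node b ts, hv, hnd => by
      set t := Cotree.node b ts with ht
      have hvt := valid_node_iff.1 (ht ▸ hv)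
      have IH : ∀ c ∈ ts, c.subtrees.countP (cP (Cotree.full N')) = 0 ∨
          c.subtrees.countP (cP (Cotree.full N')) + 1 ≤
            2 * c.leaves.countP (cP (· ∈ N')) := by
        intro c hc
        have hcmem : c ∈ t.subtrees := by
          rw [ht, mem_subtrees_node]; exact Or.inr ⟨c, hc, self_mem_subtrees c⟩
        exact full_count N' c ((hvt.2 c hc).1) (leaves_nodup_of_mem (ht ▸ hnd) (ht ▸ hcmem))
      have hk : t.leaves.countP (cP (· ∈ N')) =
          (ts.map (fun c => c.leaves.countP (cP (· ∈ N')))).sum := by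
        rw [ht, leaves_node, List.countP_flatMap]; rfl
      rw [ht, subtrees_node, List.countP_cons, List.countP_flatMap, ← ht]
      by_cases hf : Cotree.full N' t
      · right
        have hcnt : ∀ c ∈ ts,
            (Cotree.subtrees c).countP (cP (Cotree.full N')) + 1 ≤
              2 * c.leaves.countP (cP (· ∈ N')) := by
          intro c hc
          have hfc : Cotree.full N' c := by
            intro y hy
            exact hf y (ht ▸ mem_leaves_node.2 ⟨c, hc, hy⟩)
          have hpos : 0 < (Cotree.subtrees c).countP (cP (Cotree.full N')) := by
            rw [List.countP_pos_iff]
            exact ⟨c, self_mem_subtrees c, (cP_eq_true_iff _ _).2 hfc⟩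
          rcases IH c hc with h | h
          · omega
          · exact h
        have hsum := sum_add_length_le (fun c => (Cotree.subtrees c).countP (cP (Cotree.full N')))
          (fun c => 2 * c.leaves.countP (cP (· ∈ N'))) ts hcnt
        rw [two_mul_sum] at hsum
        have hlen := hvt.1
        have hft : cP (Cotree.full N') t = true := (cP_eq_true_iff _ _).2 hf
        rw [hft]
        simp only [if_true]
        rw [hk]
        have : (ts.map ((fun l => l.countP (cP (Cotree.full N'))) ∘ Cotree.subtrees)).sum =
            (ts.map (fun c => (Cotree.subtrees c).countP (cP (Cotree.full N')))).sum := rfl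
        rw [this]
        omega
      · have hft : cP (Cotree.full N') t ≠ true := by
          intro h; exact hf ((cP_eq_true_iff _ _).1 h)
        rw [if_neg hft]
        have hsum := sum_one_le (fun c => (Cotree.subtrees c).countP (cP (Cotree.full N')))
          (fun c => 2 * c.leaves.countP (cP (· ∈ N'))) ts (fun c hc => IH c hc)
        rw [two_mul_sum] at hsum
        rw [hk]
        have heq : (ts.map ((fun l => l.countP (cP (Cotree.full N'))) ∘ Cotree.subtrees)).sum =
            (ts.map (fun c => (Cotree.subtrees c).countP (cP (Cotree.full N')))).sum := rfl
        rw [heq]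
        rcases hsum with h | h
        · left; omega
        · right; omega
  termination_by t hv hnd => sizeOf t
  decreasing_by simp_wf; have := List.sizeOf_lt_of_mem hc; omega

end CotreeAux

namespace CotreeAux

open Cotree List

variable {V : Type}

lemma children_node (b : Bool) (ts : List (Cotree V)) :
    (Cotree.node b ts).children = ts := rfl

lemma children_subset_subtrees {t c : Cotree V} (hc : c ∈ t.children) : c ∈ t.subtrees := by
  cases t with
  | leaf v => exact absurd hc (List.not_mem_nil)
  | node b ts => exact mem_subtrees_node.2 (Or.inr ⟨c, hc, self_mem_subtrees c⟩)

lemma exists_other {α : Type*} {l : List α} (hnd : l.Nodup) (hlen : 2 ≤ l.length) (c : α) :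
    ∃ c₂ ∈ l, c₂ ≠ c := by
  match l, hnd, hlen with
  | a :: a' :: l, hnd, _ =>
      by_cases h : a = c
      · subst h
        exact ⟨a', List.mem_cons_of_mem _ (List.mem_cons_self),
          fun he => (List.nodup_cons.1 hnd).1 (he ▸ List.mem_cons_self)⟩
      · exact ⟨a, List.mem_cons_self, h⟩

/-- every non-hollow node contains `u` or is full w.r.t. `N'` -/
lemma decomp (T u : Cotree V) (Nx N' : Set V)
    (hnd : T.leaves.Nodup) (hsub : Nx ⊆ N') (huT : u ∈ T.subtrees)
    (hchild : ∀ c ∈ u.children, Cotree.uniform N' c)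
    (hiff : ∀ y ∈ T.leaves, y ∉ u.leaves →
      (y ∈ N' ↔ ∃ w, Cotree.IsLcaNodeLeaf T w u y ∧ w.isSeries)) :
    ∀ w ∈ T.subtrees, ¬ Cotree.hollow Nx w → u ∈ w.subtrees ∨ Cotree.full N' w := by
  intro w hwT hwnh
  unfold Cotree.hollow at hwnh
  push_neg at hwnh
  obtain ⟨z, hzw, hzNx⟩ := hwnh
  by_cases hanc : u ∈ w.subtrees
  · exact Or.inl hanc
  right
  by_cases hwu : w ∈ u.subtrees
  · -- w is strictly below u, inside a uniform child
    have hwne : w ≠ u := fun h => hanc (h ▸ self_mem_subtrees u)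
    cases u with
    | leaf v =>
        rw [mem_subtrees_leaf] at hwu
        exact absurd hwu hwne
    | node bu us =>
        rcases mem_subtrees_node.1 hwu with heq | ⟨c, hc, hwc⟩
        · exact absurd heq hwne
        have hu := hchild c (by rw [children_node]; exact hc)
        rcases hu with hfc | hhc
        · exact fun y hy => hfc y (leaves_subset_of_mem hwc hy)
        · exact absurd (hsub hzNx) (hhc z (leaves_subset_of_mem hwc hzw))
  · -- w and u are disjoint
    have hdisj : ∀ y, y ∈ w.leaves → y ∉ u.leaves := by
      intro y hyw hyu
      rcases subtrees_comparable hnd hwT huT hyw hyu with h | h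
      · exact hwu h
      · exact hanc h
    have hzT : z ∈ T.leaves := leaves_subset_of_mem hwT hzw
    obtain ⟨a, ⟨haT, hua, hza, hmin⟩, hser⟩ :=
      (hiff z hzT (hdisj z hzw)).1 (hsub hzNx)
    have hwa : w ∈ a.subtrees := by
      rcases subtrees_comparable hnd haT hwT hza hzw with h | h
      · exact absurd (mem_subtrees_trans hua h) hanc
      · exact h
    intro y hyw
    refine (hiff y (leaves_subset_of_mem hwT hyw) (hdisj y hyw)).2
      ⟨a, ⟨haT, hua, leaves_subset_of_mem hwa hyw, ?_⟩, hser⟩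
    rintro c hcch ⟨hucs, hycl⟩
    have hcT : c ∈ T.subtrees := mem_subtrees_trans (children_subset_subtrees hcch) haT
    have hwcs : w ∈ c.subtrees := by
      rcases subtrees_comparable hnd hcT hwT hycl hyw with h | h
      · exact absurd (mem_subtrees_trans hucs h) hanc
      · exact h
    exact hmin c hcch ⟨hucs, leaves_subset_of_mem hwcs hzw⟩

/-- the series strict ancestors of u inject into N' -/
lemma ser_card (T u : Cotree V) (N' : Set V) (hvT : T.valid) (hnd : T.leaves.Nodup)
    (huT : u ∈ T.subtrees) (hune : u.leaves ≠ []) (hfin : N'.Finite)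
    (hiff : ∀ y ∈ T.leaves, y ∉ u.leaves →
      (y ∈ N' ↔ ∃ w, Cotree.IsLcaNodeLeaf T w u y ∧ w.isSeries)) :
    {a | a ∈ T.subtrees ∧ (u ∈ a.subtrees ∧ a ≠ u ∧ a.isSeries)}.ncard ≤ N'.ncard := by
  set Sser := {a : Cotree V | a ∈ T.subtrees ∧ (u ∈ a.subtrees ∧ a ≠ u ∧ a.isSeries)}
    with hSser
  have hex : ∀ a ∈ Sser, ∃ y, y ∈ N' ∧ y ∈ a.leaves ∧
      ∀ c ∈ a.children, u ∈ c.subtrees → y ∉ c.leaves := by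
    rintro a ⟨haT, hua, hane, hser⟩
    cases a with
    | leaf v => simp [Cotree.isSeries] at hser
    | node b ls =>
        cases b with
        | false => simp [Cotree.isSeries] at hser
        | true =>
            have hva := valid_of_mem hvT haT
            have hnda := leaves_nodup_of_mem hnd haT
            rcases mem_subtrees_node.1 hua with heq | ⟨c, hc, huc⟩
            · exact absurd heq.symm hane
            have hlsnd : ls.Nodup := children_nodup hva hnda
            obtain ⟨c₂, hc₂, hc₂ne⟩ := exists_other hlsnd (valid_node_iff.1 hva).1 c
            have hc₂v := ((valid_node_iff.1 hva).2 c₂ hc₂).1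
            obtain ⟨y, hy⟩ := List.exists_mem_of_ne_nil _ (leaves_ne_nil hc₂v)
            have hya : y ∈ (Cotree.node true ls).leaves := mem_leaves_node.2 ⟨c₂, hc₂, hy⟩
            have hychild : ∀ c' ∈ (Cotree.node true ls).children,
                u ∈ c'.subtrees → y ∉ c'.leaves := by
              intro c' hc' huc' hyc'
              have : c' = c := uchild_unique hnda hune (by rwa [children_node] at hc') hc huc' huc
              subst this
              exact leaves_disjoint hnda hc₂ (by rwa [children_node] at hc') hc₂ne hy hyc'
            refine ⟨y, ?_, hya, hychild⟩
            refine (hiff y (leaves_subset_of_mem haT hya) ?_).2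
              ⟨Cotree.node true ls, ⟨haT, hua, hya, ?_⟩, trivial⟩
            · intro hyu
              exact hychild c (by rw [children_node]; exact hc) huc
                (leaves_subset_of_mem huc hyu)
            · rintro cc hccch ⟨hu2, hy2⟩
              exact hychild cc hccch hu2 hy2
  rcases Set.eq_empty_or_nonempty Sser with he | ⟨a0, ha0⟩
  · rw [he]; simp
  obtain ⟨y0, _⟩ := hex a0 ha0
  classical
  set f : Cotree V → V := fun a => if h : a ∈ Sser then (hex a h).choose else y0 with hf
  have hspec : ∀ a (ha : a ∈ Sser), f a ∈ N' ∧ f a ∈ a.leaves ∧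
      ∀ c ∈ a.children, u ∈ c.subtrees → f a ∉ c.leaves := by
    intro a ha
    have : f a = (hex a ha).choose := dif_pos ha
    rw [this]
    exact (hex a ha).choose_spec
  have key : ∀ a ∈ Sser, ∀ a' ∈ Sser, a' ∈ a.subtrees → a' ≠ a → f a ≠ f a' := by
    rintro a ha a' ha' hsub' hne heq
    obtain ⟨_, hya, hch⟩ := hspec a ha
    obtain ⟨_, hya', _⟩ := hspec a' ha'
    cases a with
    | leaf v =>
        rw [mem_subtrees_leaf] at hsub'
        exact hne hsub'
    | node b ls =>
        rcases mem_subtrees_node.1 hsub' with h | ⟨c, hc, hac⟩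
        · exact hne h
        have huc : u ∈ c.subtrees := mem_subtrees_trans ha'.2.1 hac
        have : f (Cotree.node b ls) ∉ c.leaves :=
          hch c (by rw [children_node]; exact hc) huc
        exact this (heq ▸ leaves_subset_of_mem hac hya')
  apply Set.ncard_le_ncard_of_injOn f (fun a ha => (hspec a ha).1) ?_ hfin
  intro a ha a' ha' heq
  by_contra hne
  obtain ⟨zu, hzu⟩ := List.exists_mem_of_ne_nil _ hune
  have hzua : zu ∈ a.leaves := leaves_subset_of_mem ha.2.1 hzu
  have hzua' : zu ∈ a'.leaves := leaves_subset_of_mem ha'.2.1 hzu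
  rcases subtrees_comparable hnd ha.1 ha'.1 hzua hzua' with h | h
  · exact key a' ha' a ha h hne heq.symm
  · exact key a ha a' ha' h (fun hh => hne hh.symm) heq

end CotreeAux

theorem stmt_19 :
    ∃ C : ℕ, ∀ (V : Type) (T : Cotree V) (Nx N' : Set V) (u : Cotree V),
      T.valid → T.leaves.Nodup → (∀ v ∈ Nx, v ∈ T.leaves) → Cotree.mixed Nx T →
      Cotree.IsConstrainedCompletion T Nx N' → Cotree.IsInsertionNode T N' u →
      {w : Cotree V | w ∈ T.subtrees ∧ ¬ Cotree.hollow Nx w}.ncard ≤ C * N'.ncard := by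
  refine ⟨6, ?_⟩
  intro V T Nx N' u hvT hnd hNxl hmix hcc hins
  obtain ⟨hsub, hN'l, _⟩ := hcc
  obtain ⟨huT, humix, hchild, hiff⟩ := hins
  open CotreeAux in
  have hSn : T.subtrees.Nodup := subtrees_nodup hvT hnd
  open CotreeAux in
  have huv : u.valid := valid_of_mem hvT huT
  open CotreeAux in
  have hune : u.leaves ≠ [] := leaves_ne_nil huv
  have hfin : N'.Finite := Set.Finite.subset (List.finite_toSet T.leaves) hN'l
  -- express the goal set cardinality as a countP
  rw [CotreeAux.ncard_eq_countP T.subtrees hSn]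
  -- express N'.ncard as a countP over the leaves
  have hKset : N' = {v | v ∈ T.leaves ∧ v ∈ N'} := by
    ext v; exact ⟨fun h => ⟨hN'l v h, h⟩, fun h => h.2⟩
  have hK : N'.ncard = T.leaves.countP (CotreeAux.cP (· ∈ N')) := by
    have h2 : {v | v ∈ T.leaves ∧ v ∈ N'}.ncard = T.leaves.countP (CotreeAux.cP (· ∈ N')) :=
      CotreeAux.ncard_eq_countP T.leaves hnd (· ∈ N')
    rw [← h2, ← hKset]
  -- N' is nonempty
  have hK1 : 1 ≤ T.leaves.countP (CotreeAux.cP (· ∈ N')) := by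
    have hnh : ¬ Cotree.hollow Nx T := fun h => hmix (Or.inr h)
    unfold Cotree.hollow at hnh
    push_neg at hnh
    obtain ⟨z0, hz0T, hz0x⟩ := hnh
    rw [Nat.succ_le_iff, List.countP_pos_iff]
    exact ⟨z0, hz0T, (CotreeAux.cP_eq_true_iff _ _).2 (hsub hz0x)⟩
  -- decompose non-hollow nodes into ancestors of u and N'-full nodes
  have hdec := CotreeAux.decomp T u Nx N' hnd hsub huT hchild hiff
  have hsplit : T.subtrees.countP (CotreeAux.cP (fun w => ¬ Cotree.hollow Nx w)) ≤
      T.subtrees.countP (CotreeAux.cP (fun w => u ∈ w.subtrees)) +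
      T.subtrees.countP (CotreeAux.cP (Cotree.full N')) := by
    refine le_trans (List.countP_mono_left ?_) (CotreeAux.countP_or_le _ _ _)
    intro w hw hpw
    rw [CotreeAux.cP_eq_true_iff] at hpw
    rw [Bool.or_eq_true, CotreeAux.cP_eq_true_iff, CotreeAux.cP_eq_true_iff]
    exact hdec w hw hpw
  -- bound the ancestors
  have hanc := (CotreeAux.anc_count T u hvT hnd huT hune).1
  have hserset := (CotreeAux.ncard_eq_countP T.subtrees hSn
    (fun a => u ∈ a.subtrees ∧ a ≠ u ∧ a.isSeries)).symm
  have hser := CotreeAux.ser_card T u N' hvT hnd huT hune hfin hiff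
  rw [← hserset] at hser
  -- bound the full nodes
  have hfull : T.subtrees.countP (CotreeAux.cP (Cotree.full N')) ≤
      2 * T.leaves.countP (CotreeAux.cP (· ∈ N')) := by
    rcases CotreeAux.full_count N' T hvT hnd with h | h
    · omega
    · omega
  rw [hK]
  omega
end
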